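/- Let $N \ge 2$ and $h_1,\dots,h_N > 0$ with $\sum_i h_i = 1$ and $h_N \le h_i$ for all $i = 1,\dots,N-1$. Let $U_h$ be the space of continuous piecewise linear functions on the mesh with nodes $x_0 = 0 < x_1 < \dots < x_N = 1$, $x_i - x_{i-1} = h_i$. Then the function $u_h \in U_h$ with $u_h(x_i) = 1$ for $i=0,\dots,N-1$ and $u_h(x_N) = 0$ minimizes $\int_0^1 |1 - v(x)|\,dx$ over all $v \in U_h$ with $v(0)=1$ and $v(1)=0$. -/

import Mathlib

open MeasureTheory

/-- The nodes of the 1D mesh with element lengths `h 1, …, h N`: `nodes h i = ∑_{j=1}^i h j`. -/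
noncomputable def nodes (h : ℕ → ℝ) (i : ℕ) : ℝ := ∑ j ∈ Finset.Icc 1 i, h j

/-- `v` is affine on each element `[nodes h i, nodes h (i+1)]`, `i = 0, …, N-1`. -/
def IsPiecewiseLinear (h : ℕ → ℝ) (N : ℕ) (v : ℝ → ℝ) : Prop :=
  ∀ i < N, ∃ a b : ℝ, ∀ t ∈ Set.Icc (nodes h i) (nodes h (i + 1)), v t = a * t + b

lemma trap (a b α β : ℝ) :
    (∫ t in a..b, (α * t + β)) = (b - a) * ((α * a + β) + (α * b + β)) / 2 := by
  have h1 : IntervalIntegrable (fun t : ℝ => α * t) volume a b :=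
    (continuous_const.mul continuous_id).intervalIntegrable a b
  have h2 : IntervalIntegrable (fun _ : ℝ => β) volume a b :=
    continuous_const.intervalIntegrable a b
  rw [intervalIntegral.integral_add h1 h2, intervalIntegral.integral_const_mul,
    integral_id, intervalIntegral.integral_const]
  simp only [smul_eq_mul]
  ring

lemma piece_ii (a b : ℝ) (hab : a ≤ b) (f : ℝ → ℝ) (α β : ℝ)
    (hf : ∀ t ∈ Set.Icc a b, f t = α * t + β) :
    IntervalIntegrable (fun t => |1 - f t|) volume a b := by
  rw [intervalIntegrable_iff_integrableOn_Icc_of_le hab]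
  have hc : IntegrableOn (fun t : ℝ => |1 - (α * t + β)|) (Set.Icc a b) volume := by
    apply Continuous.integrableOn_Icc
    exact (continuous_const.sub ((continuous_const.mul continuous_id).add continuous_const)).abs
  exact hc.congr_fun (fun t ht => by simp [hf t ht]) measurableSet_Icc

lemma piece_lb (a b : ℝ) (hab : a ≤ b) (f : ℝ → ℝ) (α β : ℝ)
    (hf : ∀ t ∈ Set.Icc a b, f t = α * t + β) (c : ℝ) (hc : |c| ≤ 1) :
    c * ((b - a) * (f a + f b) / 2) ≤ ∫ t in a..b, |f t| := by
  by_cases hab' : a = b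
  · subst hab'; simp
  have hab2 : a < b := lt_of_le_of_ne hab hab'
  have h1 : (∫ t in a..b, |f t|) = ∫ t in a..b, |α * t + β| := by
    apply intervalIntegral.integral_congr
    intro t ht
    rw [Set.uIcc_of_le hab] at ht
    simp [hf t ht]
  have h2 : (∫ t in a..b, c * (α * t + β)) ≤ ∫ t in a..b, |α * t + β| := by
    apply intervalIntegral.integral_mono_on hab
    · exact (continuous_const.mul ((continuous_const.mul continuous_id).add
        continuous_const)).intervalIntegrable a b
    · exact ((continuous_const.mul continuous_id).add continuous_const).abs.intervalIntegrable a b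
    · intro t _
      calc c * (α * t + β) ≤ |c * (α * t + β)| := le_abs_self _
        _ = |c| * |α * t + β| := abs_mul _ _
        _ ≤ 1 * |α * t + β| := mul_le_mul_of_nonneg_right hc (abs_nonneg _)
        _ = |α * t + β| := one_mul _
  have h3 : (∫ t in a..b, c * (α * t + β)) = c * ((b - a) * ((α * a + β) + (α * b + β)) / 2) := by
    rw [intervalIntegral.integral_const_mul, trap]
  rw [h1, hf a ⟨le_refl a, hab⟩, hf b ⟨hab, le_refl b⟩]
  rw [h3] at h2
  exact h2

lemma piece_const (a b : ℝ) (hab : a < b) (f : ℝ → ℝ) (α β : ℝ)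
    (hf : ∀ t ∈ Set.Icc a b, f t = α * t + β) (ha : f a = 1) (hb : f b = 1) :
    (∫ t in a..b, |1 - f t|) = 0 := by
  have ha' : α * a + β = 1 := by rw [← hf a ⟨le_refl a, hab.le⟩, ha]
  have hb' : α * b + β = 1 := by rw [← hf b ⟨hab.le, le_refl b⟩, hb]
  have hα : α = 0 := by
    have : α * (b - a) = 0 := by linarith
    rcases mul_eq_zero.mp this with h | h
    · exact h
    · exact absurd h (by linarith)
  have hβ : β = 1 := by rw [hα] at ha'; linarith
  have : (∫ t in a..b, |1 - f t|) = ∫ t in a..b, (0:ℝ) := by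
    apply intervalIntegral.integral_congr
    intro t ht
    rw [Set.uIcc_of_le hab.le] at ht
    simp [hf t ht, hα, hβ]
  rw [this, intervalIntegral.integral_zero]

lemma piece_last (a b : ℝ) (hab : a < b) (f : ℝ → ℝ) (α β : ℝ)
    (hf : ∀ t ∈ Set.Icc a b, f t = α * t + β) (ha : f a = 1) (hb : f b = 0) :
    (∫ t in a..b, |1 - f t|) = (b - a) / 2 := by
  have hba : b - a ≠ 0 := by linarith
  have ha' : α * a + β = 1 := by rw [← hf a ⟨le_refl a, hab.le⟩, ha]
  have hb' : α * b + β = 0 := by rw [← hf b ⟨hab.le, le_refl b⟩, hb]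
  have key : ∀ t ∈ Set.Icc a b, |1 - f t| = (1 / (b - a)) * t + (-(a / (b - a))) := by
    intro t ht
    rw [hf t ht]
    have hval : 1 - (α * t + β) = (t - a) / (b - a) := by
      have hα : α = -(1 / (b - a)) := by
        field_simp
        linarith
      have hβ : β = 1 - α * a := by linarith
      rw [hβ, hα]
      field_simp
      ring
    rw [hval, abs_of_nonneg (div_nonneg (by linarith [ht.1]) (by linarith))]
    ring
  have : (∫ t in a..b, |1 - f t|) = ∫ t in a..b, ((1 / (b - a)) * t + (-(a / (b - a)))) := by
    apply intervalIntegral.integral_congr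
    intro t ht
    rw [Set.uIcc_of_le hab.le] at ht
    exact key t ht
  rw [this, trap]
  field_simp
  ring

theorem stmt14 (N : ℕ) (hN : 2 ≤ N) (h : ℕ → ℝ)
    (hpos : ∀ i, 1 ≤ i → i ≤ N → 0 < h i)
    (hsum : ∑ i ∈ Finset.Icc 1 N, h i = 1)
    (hlast : ∀ i, 1 ≤ i → i ≤ N - 1 → h N ≤ h i)
    (uh : ℝ → ℝ) (huhPL : IsPiecewiseLinear h N uh)
    (huhnodes : ∀ i ≤ N - 1, uh (nodes h i) = 1) (huhN : uh (nodes h N) = 0) :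
    ∀ v : ℝ → ℝ, IsPiecewiseLinear h N v → v (nodes h 0) = 1 → v (nodes h N) = 0 →
      (∫ x in (0:ℝ)..1, |1 - uh x|) ≤ ∫ x in (0:ℝ)..1, |1 - v x| := by
  intro v hvPL hv0 hvN
  have hx0 : nodes h 0 = 0 := by simp [nodes]
  have hxN : nodes h N = 1 := hsum
  have hstep : ∀ i : ℕ, nodes h (i + 1) = nodes h i + h (i + 1) := by
    intro i
    rw [nodes, nodes, Finset.sum_Icc_succ_top (Nat.le_add_left 1 i)]
  have hlt : ∀ i < N, nodes h i < nodes h (i + 1) := by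
    intro i hi
    rw [hstep i]
    have := hpos (i + 1) (Nat.succ_le_succ (Nat.zero_le i)) hi
    linarith
  have hlen : ∀ i, nodes h (i + 1) - nodes h i = h (i + 1) := by
    intro i; rw [hstep]; ring
  -- integrability per piece
  have hiiv : ∀ k < N, IntervalIntegrable (fun t => |1 - v t|) volume (nodes h k) (nodes h (k + 1)) := by
    intro k hk
    obtain ⟨a, b, hab⟩ := hvPL k hk
    exact piece_ii _ _ (hlt k hk).le v a b hab
  have hiiu : ∀ k < N, IntervalIntegrable (fun t => |1 - uh t|) volume (nodes h k) (nodes h (k + 1)) := by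
    intro k hk
    obtain ⟨a, b, hab⟩ := huhPL k hk
    exact piece_ii _ _ (hlt k hk).le uh a b hab
  -- split integrals
  have hsplitv : (∫ x in (0:ℝ)..1, |1 - v x|) =
      ∑ i ∈ Finset.range N, ∫ x in nodes h i..nodes h (i + 1), |1 - v x| := by
    rw [intervalIntegral.sum_integral_adjacent_intervals hiiv, hx0, hxN]
  have hsplitu : (∫ x in (0:ℝ)..1, |1 - uh x|) =
      ∑ i ∈ Finset.range N, ∫ x in nodes h i..nodes h (i + 1), |1 - uh x| := by
    rw [intervalIntegral.sum_integral_adjacent_intervals hiiu, hx0, hxN]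
  -- uh pieces
  have keyu : ∀ i ∈ Finset.range N,
      (∫ x in nodes h i..nodes h (i + 1), |1 - uh x|) = if i = N - 1 then h N / 2 else 0 := by
    intro i hi
    rw [Finset.mem_range] at hi
    obtain ⟨a, b, hab⟩ := huhPL i hi
    by_cases hcase : i = N - 1
    · subst hcase
      have hNsucc : N - 1 + 1 = N := by omega
      have h1 : uh (nodes h (N - 1)) = 1 := huhnodes (N - 1) (le_refl _)
      have h0 : uh (nodes h (N - 1 + 1)) = 0 := by rw [hNsucc]; exact huhN
      rw [piece_last _ _ (hlt _ hi) uh a b hab h1 h0, hlen, hNsucc]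
      simp
    · have h1 : uh (nodes h i) = 1 := huhnodes i (by omega)
      have h2 : uh (nodes h (i + 1)) = 1 := huhnodes (i + 1) (by omega)
      rw [piece_const _ _ (hlt _ hi) uh a b hab h1 h2]
      simp [hcase]
  have hsumu : (∫ x in (0:ℝ)..1, |1 - uh x|) = h N / 2 := by
    rw [hsplitu, Finset.sum_congr rfl keyu, Finset.sum_ite_eq' (Finset.range N) (N - 1)
      (fun _ => h N / 2)]
    simp [Finset.mem_range]
    omega
  -- v pieces lower bounds
  have keyv : ∀ i ∈ Finset.range N,
      ((-1:ℝ) ^ (N - (i + 1)) * h N / h (i + 1)) *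
        ((nodes h (i + 1) - nodes h i) * ((1 - v (nodes h i)) + (1 - v (nodes h (i + 1)))) / 2)
      ≤ ∫ x in nodes h i..nodes h (i + 1), |1 - v x| := by
    intro i hi
    rw [Finset.mem_range] at hi
    obtain ⟨a, b, hab⟩ := hvPL i hi
    have hpos' := hpos (i + 1) (Nat.succ_le_succ (Nat.zero_le i)) hi
    have hle : h N ≤ h (i + 1) := by
      by_cases hcase : i + 1 = N
      · rw [hcase]
      · exact hlast (i + 1) (Nat.succ_le_succ (Nat.zero_le i)) (by omega)
    have hNpos : 0 < h N := hpos N (by omega) (le_refl N)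
    have hc : |(-1:ℝ) ^ (N - (i + 1)) * h N / h (i + 1)| ≤ 1 := by
      rw [abs_div, abs_mul, abs_pow, abs_neg, abs_one, one_pow, one_mul,
        abs_of_pos hNpos, abs_of_pos hpos']
      rw [div_le_one hpos']
      exact hle
    exact piece_lb _ _ (hlt i hi).le (fun t => 1 - v t) (-a) (1 - b)
      (fun t ht => by show 1 - v t = -a * t + (1 - b); rw [hab t ht]; ring) _ hc
  -- telescoping
  have tele : ∑ i ∈ Finset.range N,
      ((-1:ℝ) ^ (N - (i + 1)) * h N / h (i + 1)) *
        ((nodes h (i + 1) - nodes h i) * ((1 - v (nodes h i)) + (1 - v (nodes h (i + 1)))) / 2)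
      = h N / 2 := by
    have congr1 : ∀ i ∈ Finset.range N,
        ((-1:ℝ) ^ (N - (i + 1)) * h N / h (i + 1)) *
          ((nodes h (i + 1) - nodes h i) * ((1 - v (nodes h i)) + (1 - v (nodes h (i + 1)))) / 2)
        = ((-1:ℝ) ^ (N - (i + 1)) * (1 - v (nodes h (i + 1))) * (h N / 2))
          - ((-1:ℝ) ^ (N - i) * (1 - v (nodes h i)) * (h N / 2)) := by
      intro i hi
      rw [Finset.mem_range] at hi
      have hpos' := hpos (i + 1) (Nat.succ_le_succ (Nat.zero_le i)) hi
      have hni : N - i = (N - (i + 1)) + 1 := by omega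
      rw [hlen, hni, pow_succ]
      field_simp
      ring
    rw [Finset.sum_congr rfl congr1, Finset.sum_range_sub
      (fun i => (-1:ℝ) ^ (N - i) * (1 - v (nodes h i)) * (h N / 2))]
    rw [Nat.sub_self, Nat.sub_zero, hvN, hv0]
    simp
  rw [hsumu, hsplitv, ← tele]
  exact Finset.sum_le_sum keyv
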